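/- arXiv:1012.4169 — 4 statements merged into one kernel-verified Lean document; each statement's English description precedes it below -/
import Mathlib

section
/- The function d_T is an extended pseudo-distance on multidimensional persistent homology groups: for all pairs (X,φ), (Y,ψ), (Z,χ) of topological spaces with continuous ℝⁿ-valued filtering functions and any integer k, one has (i) d_T(H_k^{(X,φ)}, H_k^{(Y,ψ)}) ≥ 0; (ii) d_T(H_k^{(X,φ)}, H_k^{(X,φ)}) = 0; (iii) d_T(H_k^{(X,φ)}, H_k^{(Y,ψ)}) = d_T(H_k^{(Y,ψ)}, H_k^{(X,φ)}); (iv) d_T(H_k^{(X,φ)}, H_k^{(Z,χ)}) ≤ d_T(H_k^{(X,φ)}, H_k^{(Y,ψ)}) + d_T(H_k^{(Y,ψ)}, H_k^{(Z,χ)}) (with values in [0,∞]). -/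
open CategoryTheory

/-- The "chains with coefficients in `G`" functor `S ↦ S →₀ G`. -/
@[simps]
noncomputable def coeffFunctor (G : Type) [AddCommGroup G] : Type ⥤ AddCommGrpCat where
  obj S := AddCommGrpCat.of (S →₀ G)
  map f := AddCommGrpCat.ofHom (Finsupp.mapDomain.addMonoidHom f)
  map_id S := AddCommGrpCat.hom_ext Finsupp.mapDomain.addMonoidHom_id
  map_comp f g := AddCommGrpCat.hom_ext (Finsupp.mapDomain.addMonoidHom_comp g f)

/-- The singular chain complex with coefficients in the abelian group `G`. -/
noncomputable def singularChainComplexFunctor (G : Type) [AddCommGroup G] :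
    TopCat.{0} ⥤ ChainComplex AddCommGrpCat ℕ :=
  TopCat.toSSet ⋙ ((SimplicialObject.whiskering (Type 0) AddCommGrpCat).obj (coeffFunctor G)) ⋙
    AlgebraicTopology.alternatingFaceMapComplex AddCommGrpCat

/-- Singular homology with coefficients in `G`, in degree `k : ℤ` (trivial in negative degrees). -/
noncomputable def singularHomologyFunctor (G : Type) [AddCommGroup G] (k : ℤ) :
    TopCat.{0} ⥤ AddCommGrpCat :=
  if 0 ≤ k then
    singularChainComplexFunctor G ⋙ HomologicalComplex.homologyFunctor AddCommGrpCat _ k.toNat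
  else (Functor.const _).obj (AddCommGrpCat.of PUnit)

/-- The sublevel set `X⟨φ ≼ u⟩`. -/
def sublevelSet {n : ℕ} {X : Type} (φ : X → Fin n → ℝ) (u : Fin n → ℝ) : Set X :=
  {x | ∀ i, φ x i ≤ u i}

/-- The sublevel set as a topological space. -/
def sublevelTop {n : ℕ} {X : Type} [TopologicalSpace X] (φ : X → Fin n → ℝ)
    (u : Fin n → ℝ) : TopCat.{0} :=
  TopCat.of (sublevelSet φ u)

/-- The inclusion of sublevel sets. -/
def sublevelIncl {n : ℕ} {X : Type} [TopologicalSpace X] (φ : X → Fin n → ℝ)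
    {u v : Fin n → ℝ} (h : ∀ i, u i ≤ v i) : sublevelTop φ u ⟶ sublevelTop φ v :=
  TopCat.ofHom (ContinuousMap.mk (Set.inclusion (fun _x hx i => le_trans (hx i) (h i)))
    (continuous_inclusion _))

/-- The multidimensional `k`-th persistent homology group of `(X, φ)` at `(u, v)`,
with coefficients in the abelian group `G`: the image of the homomorphism induced
in homology by the inclusion of sublevel sets. -/
noncomputable def persistentHomologyGroup (G : Type) [AddCommGroup G] (k : ℤ)
    {n : ℕ} {X : Type} [TopologicalSpace X] (φ : X → Fin n → ℝ)
    {u v : Fin n → ℝ} (h : ∀ i, u i ≤ v i) : Type :=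
  AddMonoidHom.range ((singularHomologyFunctor G k).map (sublevelIncl φ h)).hom

noncomputable instance (G : Type) [AddCommGroup G] (k : ℤ)
    {n : ℕ} {X : Type} [TopologicalSpace X] (φ : X → Fin n → ℝ)
    {u v : Fin n → ℝ} (h : ∀ i, u i ≤ v i) :
    AddCommGroup (persistentHomologyGroup G k φ h) := by
  unfold persistentHomologyGroup; infer_instance

/-- There is a surjective homomorphism from a subgroup of `A` onto `B`. -/
def ExistsSurjHomFromSubgroup (A B : Type) [AddCommGroup A] [AddCommGroup B] : Prop :=
  ∃ (S : AddSubgroup A) (f : S →+ B), Function.Surjective f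

/-- The set `E` of all `ε ≥ 0` such that, for every `(u,v) ∈ Δ⁺`, surjective homomorphisms
exist from a subgroup of `H_k^{(X,φ)}(u,v)` onto `H_k^{(Y,ψ)}(u-ε⃗,v+ε⃗)` and from a subgroup of
`H_k^{(Y,ψ)}(u,v)` onto `H_k^{(X,φ)}(u-ε⃗,v+ε⃗)`. -/
def dTSet (G : Type) [AddCommGroup G] (k : ℤ) {n : ℕ} {X Y : Type}
    [TopologicalSpace X] [TopologicalSpace Y]
    (φ : X → Fin n → ℝ) (ψ : Y → Fin n → ℝ) : Set ℝ :=
  {ε | ∃ hε : 0 ≤ ε, ∀ u v : Fin n → ℝ, ∀ h : ∀ i, u i < v i,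
    ExistsSurjHomFromSubgroup
      (persistentHomologyGroup G k φ (fun i => (h i).le))
      (persistentHomologyGroup G k ψ
        (u := fun i => u i - ε) (v := fun i => v i + ε)
        (fun i => by have := (h i).le; linarith)) ∧
    ExistsSurjHomFromSubgroup
      (persistentHomologyGroup G k ψ (fun i => (h i).le))
      (persistentHomologyGroup G k φ
        (u := fun i => u i - ε) (v := fun i => v i + ε)
        (fun i => by have := (h i).le; linarith))}

/-- The pseudo-distance `d_T` between the `k`-th persistent homology groups of `(X,φ)`
and `(Y,ψ)`: the infimum of the set `E` (`∞` if `E` is empty). -/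
noncomputable def dT (G : Type) [AddCommGroup G] (k : ℤ) {n : ℕ} {X Y : Type}
    [TopologicalSpace X] [TopologicalSpace Y]
    (φ : X → Fin n → ℝ) (ψ : Y → Fin n → ℝ) : ENNReal :=
  sInf (ENNReal.ofReal '' dTSet G k φ ψ)

/-- The sup-norm (max-norm) distance between two `ℝⁿ`-valued functions. -/
noncomputable def supNormDist {n : ℕ} {X : Type} (φ ψ : X → Fin n → ℝ) : ENNReal :=
  ⨆ (x : X) (i : Fin n), ENNReal.ofReal |φ x i - ψ x i|

/-- The natural pseudo-distance between `(X,φ)` and `(Y,ψ)`: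
`inf_h ‖φ - ψ ∘ h‖_∞` over all homeomorphisms `h : X → Y` (`∞` if none exists). -/
noncomputable def naturalPseudoDistance {n : ℕ} {X Y : Type}
    [TopologicalSpace X] [TopologicalSpace Y]
    (φ : X → Fin n → ℝ) (ψ : Y → Fin n → ℝ) : ENNReal :=
  ⨅ (h : X ≃ₜ Y), supNormDist φ (fun x => ψ (h x))

/-! ### Auxiliary lemmas -/

lemma ESHS_refl (A : Type) [AddCommGroup A] : ExistsSurjHomFromSubgroup A A :=
  ⟨⊤, AddSubgroup.subtype ⊤, fun a => ⟨⟨a, AddSubgroup.mem_top a⟩, rfl⟩⟩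

lemma ESHS_trans {A B C : Type} [AddCommGroup A] [AddCommGroup B] [AddCommGroup C]
    (h₁ : ExistsSurjHomFromSubgroup A B) (h₂ : ExistsSurjHomFromSubgroup B C) :
    ExistsSurjHomFromSubgroup A C := by
  obtain ⟨S, f, hf⟩ := h₁
  obtain ⟨T, g, hg⟩ := h₂
  refine ⟨(T.comap f).map S.subtype, ?_, ?_⟩
  · exact g.comp (((f.comp (T.comap f).subtype).codRestrict T (fun x => x.2)).comp
      ((T.comap f).equivMapOfInjective S.subtype (AddSubgroup.subtype_injective S)).symm.toAddMonoidHom)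
  · intro c
    obtain ⟨t, ht⟩ := hg c
    obtain ⟨s, hs⟩ := hf (t : B)
    have hsm : s ∈ T.comap f := by simp [AddSubgroup.mem_comap, hs]
    refine ⟨((T.comap f).equivMapOfInjective S.subtype (AddSubgroup.subtype_injective S)) ⟨s, hsm⟩, ?_⟩
    simp only [AddMonoidHom.comp_apply, AddEquiv.coe_toAddMonoidHom, AddEquiv.symm_apply_apply]
    rw [← ht]
    congr 1
    exact Subtype.ext hs

lemma ESHS_congr {A : Type} [AddCommGroup A] (G : Type) [AddCommGroup G] (k : ℤ)
    {n : ℕ} {W : Type} [TopologicalSpace W] (φ : W → Fin n → ℝ)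
    {u v u' v' : Fin n → ℝ} (hu : u = u') (hv : v = v')
    (h : ∀ i, u i ≤ v i) (h' : ∀ i, u' i ≤ v' i)
    (H : ExistsSurjHomFromSubgroup A (persistentHomologyGroup G k φ h)) :
    ExistsSurjHomFromSubgroup A (persistentHomologyGroup G k φ h') := by
  subst hu; subst hv; exact H

lemma dTSet_add_mem (G : Type) [AddCommGroup G] (k : ℤ) {n : ℕ} {X Y Z : Type}
    [TopologicalSpace X] [TopologicalSpace Y] [TopologicalSpace Z]
    (φ : X → Fin n → ℝ) (ψ : Y → Fin n → ℝ) (χ : Z → Fin n → ℝ)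
    {a b : ℝ} (ha : a ∈ dTSet G k φ ψ) (hb : b ∈ dTSet G k ψ χ) :
    a + b ∈ dTSet G k φ χ := by
  obtain ⟨ha0, Ha⟩ := ha
  obtain ⟨hb0, Hb⟩ := hb
  refine ⟨by linarith, fun u v h => ?_⟩
  have h₁ : ∀ i, (fun i => u i - a) i < (fun i => v i + a) i := fun i => by
    have := h i; dsimp only; linarith
  have h₂ : ∀ i, (fun i => u i - b) i < (fun i => v i + b) i := fun i => by
    have := h i; dsimp only; linarith
  constructor
  · refine ESHS_congr G k χ (u := fun i => (u i - a) - b) (v := fun i => (v i + a) + b)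
      (u' := fun i => u i - (a + b)) (v' := fun i => v i + (a + b))
      (funext fun i => by ring) (funext fun i => by ring)
      (fun i => by have := h i; linarith)
      (fun i => by have := h i; linarith) ?_
    exact ESHS_trans ((Ha u v h).1) ((Hb _ _ h₁).1)
  · refine ESHS_congr G k φ (u := fun i => (u i - b) - a) (v := fun i => (v i + b) + a)
      (u' := fun i => u i - (a + b)) (v' := fun i => v i + (a + b))
      (funext fun i => by ring) (funext fun i => by ring)
      (fun i => by have := h i; linarith)
      (fun i => by have := h i; linarith) ?_
    exact ESHS_trans ((Hb u v h).2) ((Ha _ _ h₂).2)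

/-- **Theorem (The function `d_T` is an extended pseudo-distance).**
For all pairs `(X,φ)`, `(Y,ψ)`, `(Z,χ)` of topological spaces with continuous `ℝⁿ`-valued
filtering functions and any integer `k`: `d_T` is non-negative, vanishes on two equal pairs,
is symmetric, and satisfies the triangle inequality (with values in `[0,∞]`). -/
theorem dT_isExtendedPseudoDistance (G : Type) [AddCommGroup G] (k : ℤ) (n : ℕ)
    {X Y Z : Type} [TopologicalSpace X] [TopologicalSpace Y] [TopologicalSpace Z]
    (φ : X → Fin n → ℝ) (ψ : Y → Fin n → ℝ) (χ : Z → Fin n → ℝ)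
    (hφ : Continuous φ) (hψ : Continuous ψ) (hχ : Continuous χ) :
    0 ≤ dT G k φ ψ ∧
    dT G k φ φ = 0 ∧
    dT G k φ ψ = dT G k ψ φ ∧
    dT G k φ χ ≤ dT G k φ ψ + dT G k ψ χ := by
  
  refine ⟨zero_le, ?_, ?_, ?_⟩
  · -- dT φ φ = 0
    have h0 : (0:ℝ) ∈ dTSet G k φ φ := by
      refine ⟨le_refl 0, fun u v h => ?_⟩
      constructor <;>
      · refine ESHS_congr G k φ (u := u) (v := v)
          (funext fun i => by simp) (funext fun i => by simp) (fun i => (h i).le) _ ?_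
        exact ESHS_refl _
    have : dT G k φ φ ≤ 0 := by
      have hmem : ENNReal.ofReal 0 ∈ ENNReal.ofReal '' dTSet G k φ φ := ⟨0, h0, rfl⟩
      have := sInf_le hmem
      simpa [dT] using this
    exact le_antisymm this zero_le
  · -- symmetry
    have hset : dTSet G k φ ψ = dTSet G k ψ φ := by
      ext ε
      constructor <;> rintro ⟨hε, H⟩ <;> exact ⟨hε, fun u v h => (H u v h).symm⟩
    simp [dT, hset]
  · -- triangle inequality
    have key : ∀ p ∈ ENNReal.ofReal '' dTSet G k φ ψ, ∀ q ∈ ENNReal.ofReal '' dTSet G k ψ χ,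
        dT G k φ χ ≤ p + q := by
      rintro _ ⟨a, ha, rfl⟩ _ ⟨b, hb, rfl⟩
      have hmem : a + b ∈ dTSet G k φ χ := dTSet_add_mem G k φ ψ χ ha hb
      calc dT G k φ χ ≤ ENNReal.ofReal (a + b) := sInf_le ⟨a + b, hmem, rfl⟩
        _ = ENNReal.ofReal a + ENNReal.ofReal b := ENNReal.ofReal_add ha.1 hb.1
    simp only [dT]
    rw [ENNReal.sInf_add]
    refine le_iInf₂ fun p hp => ?_
    rw [add_comm, ENNReal.sInf_add]
    refine le_iInf₂ fun q hq => ?_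
    rw [add_comm]
    exact key p hp q hq
end

section
/- Let X, Y be two homeomorphic compact topological spaces endowed with continuous functions φ: X → ℝⁿ and ψ: Y → ℝⁿ. Assume h: X → Y is a homeomorphism such that ‖φ − ψ∘h‖_∞ ≤ ε. Then for every pair (u,v) ∈ Δ⁺ there exist a subgroup S of H_k^{(X,φ)}(u,v) and a surjective homomorphism f: S → H_k^{(Y,ψ)}(u−ε⃗, v+ε⃗), where ε⃗ = (ε,…,ε) ∈ ℝⁿ. -/
open CategoryTheory

lemma exists_surj_aux {A B C D : Type*} [AddCommGroup A] [AddCommGroup B]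
    [AddCommGroup C] [AddCommGroup D]
    (α : A →+ B) (β : B →+ C) (γ : C →+ D) (δ : A →+ D)
    (hcomm : ∀ a, γ (β (α a)) = δ a) :
    ∃ (S : AddSubgroup β.range) (f : S →+ δ.range), Function.Surjective f := by
  have hmem : ∀ s : AddSubgroup.comap β.range.subtype (β.comp α).range,
      γ s.1.1 ∈ δ.range := by
    rintro ⟨⟨c, hc⟩, a, ha⟩
    exact ⟨a, by rw [← hcomm a]; exact congrArg γ ha⟩
  refine ⟨AddSubgroup.comap β.range.subtype (β.comp α).range,
    { toFun := fun s => ⟨γ s.1.1, hmem s⟩,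
      map_zero' := Subtype.ext (map_zero γ),
      map_add' := fun s t => Subtype.ext (map_add γ _ _) }, ?_⟩
  rintro ⟨d, a, rfl⟩
  exact ⟨⟨⟨β (α a), ⟨α a, rfl⟩⟩, ⟨a, rfl⟩⟩, Subtype.ext (hcomm a)⟩

/-- **Lemma.** Let `X`, `Y` be two homeomorphic compact topological spaces endowed with
continuous functions `φ : X → ℝⁿ`, `ψ : Y → ℝⁿ`. Assume `h : X → Y` is a homeomorphism such
that `‖φ − ψ∘h‖_∞ ≤ ε`. Then for every pair `(u,v) ∈ Δ⁺` there exist a subgroup `S` of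
`H_k^{(X,φ)}(u,v)` and a surjective homomorphism `f : S → H_k^{(Y,ψ)}(u−ε⃗, v+ε⃗)`. -/
theorem exists_surjHom_of_homeomorph (G : Type) [AddCommGroup G] (k : ℤ) (n : ℕ)
    {X Y : Type} [TopologicalSpace X] [TopologicalSpace Y]
    [CompactSpace X] [CompactSpace Y]
    (φ : X → Fin n → ℝ) (ψ : Y → Fin n → ℝ) (hφ : Continuous φ) (hψ : Continuous ψ)
    (h : X ≃ₜ Y) (ε : ℝ) (hε : 0 ≤ ε)
    (hnorm : ∀ x : X, ∀ i : Fin n, |φ x i - ψ (h x) i| ≤ ε)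
    (u v : Fin n → ℝ) (huv : ∀ i, u i < v i) :
    ∃ (S : AddSubgroup (persistentHomologyGroup G k φ (fun i => (huv i).le)))
      (f : S →+ persistentHomologyGroup G k ψ
        (u := fun i => u i - ε) (v := fun i => v i + ε)
        (fun i => by have := (huv i).le; linarith)),
      Function.Surjective f := by
  set F := singularHomologyFunctor G k with hF
  have huv' : ∀ i, u i ≤ v i := fun i => (huv i).le
  have hle : ∀ i, (fun i => u i - ε) i ≤ (fun i => v i + ε) i := fun i => by
    have := (huv i).le; dsimp only; linarith
  let mA : sublevelTop ψ (fun i => u i - ε) ⟶ sublevelTop φ u :=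
    TopCat.ofHom <| ContinuousMap.mk
      (fun y => ⟨h.symm y.1, fun i => by
        have h1 := hnorm (h.symm y.1) i
        rw [h.apply_symm_apply] at h1
        have h2 := y.2 i
        have h3 := (abs_le.mp h1).2
        dsimp only at h2 ⊢
        linarith⟩)
      (Continuous.subtype_mk (h.symm.continuous.comp continuous_subtype_val) _)
  let mC : sublevelTop φ v ⟶ sublevelTop ψ (fun i => v i + ε) :=
    TopCat.ofHom <| ContinuousMap.mk
      (fun x => ⟨h x.1, fun i => by
        have h1 := (abs_le.mp (hnorm x.1 i)).1
        have h2 := x.2 i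
        dsimp only
        linarith⟩)
      (Continuous.subtype_mk (h.continuous.comp continuous_subtype_val) _)
  have hcomp : mA ≫ sublevelIncl φ huv' ≫ mC = sublevelIncl ψ hle := by
    ext y
    refine Subtype.ext ?_
    exact h.apply_symm_apply y.1
  have hcomm : ∀ a, (F.map mC).hom ((F.map (sublevelIncl φ huv')).hom ((F.map mA).hom a)) =
      (F.map (sublevelIncl ψ hle)).hom a := by
    intro a
    have := congrArg (fun f => (F.map f).hom a) hcomp
    simpa [Functor.map_comp] using this
  exact exists_surj_aux (F.map mA).hom (F.map (sublevelIncl φ huv')).hom (F.map mC).hom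
    (F.map (sublevelIncl ψ hle)).hom hcomm
end

section
/- Let A = ⨁_{i∈ℕ} ℤ be the direct sum of countably many copies of the integers and let B = ℤ/2ℤ ⊕ A. Then there exists a surjective group homomorphism from A onto B and a surjective group homomorphism from B onto A, but A and B are not isomorphic as groups (B has a nonzero element of finite order while A is torsion-free). Consequently, the pseudo-distance d_T is not a distance: two topological spaces whose k-th homology groups are A and B respectively, each endowed with the identically zero filtering function, have d_T equal to 0 between their k-th persistent homology groups although these groups are not isomorphic. -/
open CategoryTheory

open scoped NNReal in
noncomputable instance instNonemptyToTopObj (x : SimplexCategory) :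
    Nonempty (SimplexCategory.toTop.{0}.obj x) := inferInstance

instance instEmptySimplices (T : TopCat.{0}) [IsEmpty T] (m : SimplexCategoryᵒᵖ) :
    IsEmpty ((TopCat.toSSet.obj T).obj m) := by
  constructor
  intro g
  exact IsEmpty.false ((TopCat.toSSetObjEquiv T m g) (Classical.arbitrary _))

lemma homology_subsingleton (C : ChainComplex AddCommGrpCat.{0} ℕ)
    (h : ∀ n, Subsingleton (C.X n)) (n : ℕ) :
    Subsingleton ((HomologicalComplex.homologyFunctor AddCommGrpCat _ n).obj C) := by
  have hid : (𝟙 C : C ⟶ C) = 0 := by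
    ext m x
    exact (h m).elim _ _
  have h2 : 𝟙 ((HomologicalComplex.homologyFunctor AddCommGrpCat _ n).obj C)
      = 0 := by
    have := (HomologicalComplex.homologyFunctor AddCommGrpCat _ n).map_id C
    rw [hid, Functor.map_zero] at this
    exact this.symm
  constructor
  intro a b
  have ha := ConcreteCategory.congr_hom h2 a
  have hb := ConcreteCategory.congr_hom h2 b
  rw [show a = (𝟙 ((HomologicalComplex.homologyFunctor AddCommGrpCat _ n).obj C)) a from rfl, ha,
    show b = (𝟙 ((HomologicalComplex.homologyFunctor AddCommGrpCat _ n).obj C)) b from rfl, hb]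
  rfl

lemma chain_subsingleton (T : TopCat.{0}) [IsEmpty T] (m : ℕ) :
    Subsingleton (((singularChainComplexFunctor ℤ).obj T).X m) :=
  inferInstanceAs (Subsingleton
    ((TopCat.toSSet.obj T).obj (Opposite.op (SimplexCategory.mk m)) →₀ ℤ))

lemma shf_subsingleton (T : TopCat.{0}) [IsEmpty T] (k : ℤ) :
    Subsingleton ((singularHomologyFunctor ℤ k).obj T) := by
  rw [singularHomologyFunctor]
  split_ifs
  · exact homology_subsingleton _ (chain_subsingleton T) _
  · exact inferInstanceAs (Subsingleton PUnit)

lemma range_subsingleton {A B : Type} [AddCommGroup A] [AddCommGroup B]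
    (f : A →+ B) [Subsingleton A] : Subsingleton f.range := by
  constructor
  rintro ⟨_, a, rfl⟩ ⟨_, b, rfl⟩
  exact Subtype.ext (congrArg f (Subsingleton.elim a b))

lemma exSurj_of_subsingleton (A B : Type) [AddCommGroup A] [AddCommGroup B] [Subsingleton B] :
    ExistsSurjHomFromSubgroup A B :=
  ⟨⊤, 0, fun b => ⟨0, (Subsingleton.elim _ _)⟩⟩

lemma exSurj_of_hom {A B : Type} [AddCommGroup A] [AddCommGroup B] (f : A →+ B)
    (hf : Function.Surjective f) : ExistsSurjHomFromSubgroup A B :=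
  ⟨⊤, f.comp (AddSubgroup.subtype ⊤), fun b => by
    obtain ⟨a, ha⟩ := hf b
    exact ⟨⟨a, trivial⟩, ha⟩⟩

lemma persist_subsingleton {n : ℕ} {X : Type} [TopologicalSpace X] (k : ℤ)
    {u v : Fin n → ℝ} (hne : ¬ ∀ i, (0:ℝ) ≤ u i) (h : ∀ i, u i ≤ v i) :
    Subsingleton (persistentHomologyGroup ℤ k (fun _ : X => (0 : Fin n → ℝ)) h) := by
  push_neg at hne
  obtain ⟨i, hi⟩ := hne
  haveI : IsEmpty (sublevelTop (fun _ : X => (0 : Fin n → ℝ)) u) :=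
    ⟨fun x => absurd (x.2 i) (not_le.mpr hi)⟩
  haveI := shf_subsingleton (sublevelTop (fun _ : X => (0 : Fin n → ℝ)) u) k
  unfold persistentHomologyGroup
  exact range_subsingleton _

lemma persist_equiv {n : ℕ} {X : Type} [TopologicalSpace X] (k : ℤ)
    {u v : Fin n → ℝ} (hu : ∀ i, (0:ℝ) ≤ u i) (h : ∀ i, u i ≤ v i) :
    Nonempty (persistentHomologyGroup ℤ k (fun _ : X => (0 : Fin n → ℝ)) h ≃+
      ((singularHomologyFunctor ℤ k).obj (TopCat.of X))) := by
  set φ : X → Fin n → ℝ := fun _ => 0 with hφ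
  have hv : ∀ i, (0:ℝ) ≤ v i := fun i => le_trans (hu i) (h i)
  let invf : sublevelTop φ v ⟶ sublevelTop φ u :=
    TopCat.ofHom (ContinuousMap.mk (Set.inclusion (fun x _ i => hu i)) (continuous_inclusion _))
  haveI : IsIso (sublevelIncl φ h) := by
    refine ⟨invf, ?_, ?_⟩
    · ext x
      rfl
    · ext x
      rfl
  haveI : IsIso ((singularHomologyFunctor ℤ k).map (sublevelIncl φ h)) :=
    Functor.map_isIso _ _
  have hbij := ConcreteCategory.bijective_of_isIso
    ((singularHomologyFunctor ℤ k).map (sublevelIncl φ h))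
  let homeo : sublevelTop φ v ≃ₜ TopCat.of X :=
    { toFun := Subtype.val
      invFun := fun x => ⟨x, fun i => hv i⟩
      left_inv := fun x => Subtype.ext rfl
      right_inv := fun _ => rfl
      continuous_toFun := continuous_subtype_val
      continuous_invFun := Continuous.subtype_mk continuous_id _ }
  let e2 := ((singularHomologyFunctor ℤ k).mapIso
    (TopCat.isoOfHomeo homeo)).addCommGroupIsoToAddEquiv
  refine ⟨?_⟩
  unfold persistentHomologyGroup
  exact (AddEquiv.ofBijective (AddMonoidHom.range
      ((singularHomologyFunctor ℤ k).map (sublevelIncl φ h)).hom).subtype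
    ⟨Subtype.val_injective, fun b => ⟨⟨b, hbij.2 b⟩, rfl⟩⟩).trans e2

noncomputable def E0 : (ℕ →₀ ℤ) ≃+ ℤ × (ℕ →₀ ℤ) :=
  (Finsupp.domCongr ((Denumerable.eqv (Option ℕ)).symm.trans
      ((Equiv.optionEquivSumPUnit ℕ).trans (Equiv.sumComm ℕ PUnit.{1})))).trans
    (Finsupp.sumFinsuppAddEquivProdFinsupp.trans
      (AddEquiv.prodCongr ((Finsupp.addEquivFunOnFinite).trans (AddEquiv.piUnique _))
        (AddEquiv.refl _)))

noncomputable def fAB : (ℕ →₀ ℤ) →+ (ZMod 2 × (ℕ →₀ ℤ)) :=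
  ((Int.castAddHom (ZMod 2)).prodMap (AddMonoidHom.id _)).comp E0.toAddMonoidHom

lemma fAB_surj : Function.Surjective fAB :=
  (Function.Surjective.prodMap ZMod.intCast_surjective Function.surjective_id).comp
    E0.surjective

lemma A_torsionfree : ∀ a : ℕ →₀ ℤ, a ≠ 0 → ∀ m : ℕ, 0 < m → m • a ≠ 0 := by
  intro a ha m hm hma
  obtain ⟨x, hx⟩ := Finsupp.ne_iff.mp ha
  have hx2 := DFunLike.congr_fun hma x
  rw [Finsupp.smul_apply, Finsupp.coe_zero, Pi.zero_apply, nsmul_eq_mul] at hx2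
  rcases mul_eq_zero.mp hx2 with h1 | h2
  · exact hm.ne' (by exact_mod_cast h1)
  · exact hx (by simpa using h2)

lemma b_spec : ((1 : ZMod 2), (0 : ℕ →₀ ℤ)) ≠ 0 ∧
    (2 : ℕ) • ((1 : ZMod 2), (0 : ℕ →₀ ℤ)) = 0 := by
  constructor
  · intro hb
    have := congrArg Prod.fst hb
    simp at this
  · rw [Prod.smul_mk, smul_zero]
    have : (2 : ℕ) • (1 : ZMod 2) = 0 := by decide
    rw [this]
    rfl
/-- **`d_T` is not a distance.** Let `A = ⨁_{i∈ℕ} ℤ` and `B = ℤ/2ℤ ⊕ A`. There exist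
surjective homomorphisms from `A` onto `B` and from `B` onto `A`, but `A` and `B` are not
isomorphic (`B` has a nonzero element of finite order while `A` is torsion-free).
Consequently, two topological spaces whose `k`-th homology groups are `A` and `B`,
each endowed with the identically zero filtering function, have `d_T = 0` between their
`k`-th persistent homology groups although these groups are not isomorphic. -/
theorem dT_not_a_distance :
    (∃ f : (ℕ →₀ ℤ) →+ (ZMod 2 × (ℕ →₀ ℤ)), Function.Surjective f) ∧
    (∃ g : (ZMod 2 × (ℕ →₀ ℤ)) →+ (ℕ →₀ ℤ), Function.Surjective g) ∧
    (∃ b : ZMod 2 × (ℕ →₀ ℤ), b ≠ 0 ∧ ∃ m : ℕ, 0 < m ∧ m • b = 0) ∧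
    (∀ a : ℕ →₀ ℤ, a ≠ 0 → ∀ m : ℕ, 0 < m → m • a ≠ 0) ∧
    IsEmpty ((ℕ →₀ ℤ) ≃+ (ZMod 2 × (ℕ →₀ ℤ))) ∧
    ∀ (n : ℕ) (k : ℤ) (X Y : Type) (_ : TopologicalSpace X) (_ : TopologicalSpace Y),
      Nonempty (((singularHomologyFunctor ℤ k).obj (TopCat.of X)) ≃+ (ℕ →₀ ℤ)) →
      Nonempty (((singularHomologyFunctor ℤ k).obj (TopCat.of Y)) ≃+
        (ZMod 2 × (ℕ →₀ ℤ))) →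
      dT ℤ k (fun _ : X => (0 : Fin n → ℝ)) (fun _ : Y => (0 : Fin n → ℝ)) = 0 := by

  refine ⟨⟨fAB, fAB_surj⟩, ⟨AddMonoidHom.snd _ _, fun a => ⟨(0, a), rfl⟩⟩,
    ⟨((1 : ZMod 2), (0 : ℕ →₀ ℤ)), b_spec.1, 2, two_pos, b_spec.2⟩, A_torsionfree, ?_, ?_⟩
  · constructor
    intro e
    refine A_torsionfree (e.symm ((1 : ZMod 2), (0 : ℕ →₀ ℤ))) ?_ 2 two_pos ?_
    · intro h0
      refine b_spec.1 ?_
      rw [← e.apply_symm_apply ((1 : ZMod 2), (0 : ℕ →₀ ℤ)), h0, map_zero]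
    · rw [← map_nsmul, b_spec.2, map_zero]
  · intro n k X Y _ _ hX hY
    obtain ⟨eX⟩ := hX
    obtain ⟨eY⟩ := hY
    have h0 : (0:ℝ) ∈ dTSet ℤ k (fun _ : X => (0 : Fin n → ℝ)) (fun _ : Y => (0 : Fin n → ℝ)) := by
      refine ⟨le_refl 0, fun u v h => ?_⟩
      by_cases hu : ∀ i, (0:ℝ) ≤ u i
      · have hu' : ∀ i, (0:ℝ) ≤ u i - 0 := fun i => by simpa using hu i
        have h2 : ∀ i, u i - 0 ≤ v i + 0 := fun i => by have := (h i).le; linarith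
        obtain ⟨e1⟩ := persist_equiv (X := X) k hu (fun i => (h i).le)
        obtain ⟨e2⟩ := persist_equiv (X := Y) k hu (fun i => (h i).le)
        obtain ⟨e1'⟩ := persist_equiv (X := X) k hu' h2
        obtain ⟨e2'⟩ := persist_equiv (X := Y) k hu' h2
        constructor
        · refine exSurj_of_hom
            ((e2'.symm.toAddMonoidHom.comp (eY.symm.toAddMonoidHom.comp fAB)).comp
              (eX.toAddMonoidHom.comp e1.toAddMonoidHom)) ?_
          exact (((e2'.symm.surjective.comp (eY.symm.surjective.comp fAB_surj)).comp
            eX.surjective).comp e1.surjective)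
        · refine exSurj_of_hom
            ((e1'.symm.toAddMonoidHom.comp (eX.symm.toAddMonoidHom.comp
              ((AddMonoidHom.snd (ZMod 2) (ℕ →₀ ℤ))))).comp
              (eY.toAddMonoidHom.comp e2.toAddMonoidHom)) ?_
          refine (((e1'.symm.surjective.comp (eX.symm.surjective.comp
            (fun a => ⟨(0, a), rfl⟩))).comp eY.surjective).comp e2.surjective)
      · have hu' : ¬ ∀ i, (0:ℝ) ≤ u i - 0 := by
          intro hc
          exact hu (fun i => by simpa using hc i)
        have h2 : ∀ i, u i - 0 ≤ v i + 0 := fun i => by have := (h i).le; linarith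
        haveI := persist_subsingleton (X := X) k hu' h2
        haveI := persist_subsingleton (X := Y) k hu' h2
        exact ⟨exSurj_of_subsingleton _ _, exSurj_of_subsingleton _ _⟩
    unfold dT
    exact le_antisymm (sInf_le ⟨0, h0, by simp⟩) zero_le
end

section
/- Let S² = {(x,y,z) ∈ ℝ³ : x²+y²+z² = 1}, let 𝒢 be the space of unordered pairs {p,q} of points of S² endowed with the Hausdorff distance, and let φ_𝒢({p,q}) = −‖p−q‖. For v < 0, let 𝒢_v = {{p,q} ∈ 𝒢 : ‖p−q‖ ≥ −v} be the sublevel set of φ_𝒢 at level v, and let f: 𝒢_v → ℝP² be the continuous map taking each unordered pair {p,q} (with p ≠ q, which holds since v < 0) to the direction of the line through p and q, viewed as a point of the real projective plane ℝP². Then there exists v₀ < 0 such that for every v with v₀ < v < 0, the map f is a homotopy equivalence, with homotopy inverse the map g: ℝP² → 𝒢_v taking each direction w to the unordered pair of the two points at which the line through the origin with direction w meets S². -/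
open CategoryTheory

/-- The Euclidean space `ℝ³`. -/
abbrev E3 : Type := EuclideanSpace ℝ (Fin 3)

/-- The unit sphere `S² ⊆ ℝ³`. -/
abbrev Sphere2 : Type := Metric.sphere (0 : E3) 1

/-- The space `𝒢` of unordered pairs of points of `S²`. -/
def GraspSpace : Type := Sym2 Sphere2

/-- The map sending an unordered pair `{p,q}` of points of `S²` to the corresponding
(nonempty compact) subset `{p,q}` of `ℝ³`. -/
noncomputable def GraspSpace.toNC : GraspSpace → TopologicalSpace.NonemptyCompacts E3 :=
  Sym2.lift ⟨fun p q =>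
    ⟨⟨{(p : E3), (q : E3)}, ((Set.finite_singleton _).insert _).isCompact⟩,
      Set.insert_nonempty _ _⟩,
    fun p q => by
      apply TopologicalSpace.NonemptyCompacts.ext
      simp [Set.pair_comm (p : E3) (q : E3)]⟩

/-- `𝒢` is topologized by the Hausdorff distance between the corresponding subsets of `S²`:
its topology is induced by the embedding into the nonempty compact subsets of `ℝ³`, endowed
with the Hausdorff-distance metric. -/
noncomputable instance : TopologicalSpace GraspSpace :=
  TopologicalSpace.induced GraspSpace.toNC inferInstance

/-- The filtering function `φ_𝒢({p,q}) = −‖p−q‖` on the space of unordered pairs. -/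
noncomputable def graspCost : GraspSpace → ℝ :=
  Sym2.lift ⟨fun p q => -dist (p : E3) (q : E3), fun p q => by dsimp only; rw [dist_comm]⟩

/-- The sublevel set `𝒢_v = {{p,q} ∈ 𝒢 : φ_𝒢({p,q}) ≤ v}`. -/
def graspSublevel (v : ℝ) : Set GraspSpace := {g | graspCost g ≤ v}

/-- The antipodal relation on the sphere: `p ∼ q` iff `p = q` or `p = −q`. -/
def antipodalSetoid : Setoid Sphere2 where
  r p q := (p : E3) = q ∨ (p : E3) = -(q : E3)
  iseqv := by
    constructor
    · intro p; left; rfl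
    · rintro p q (h | h)
      · left; exact h.symm
      · right; rw [h, neg_neg]
    · rintro p q r (h1 | h1) (h2 | h2)
      · left; rw [h1, h2]
      · right; rw [h1, h2]
      · right; rw [h1, h2]
      · left; rw [h1, h2, neg_neg]

/-- The real projective plane `ℝP²`, represented as the set of unordered pairs `{p,−p}` of
antipodal points of `S²`, i.e. the quotient of the sphere by the antipodal relation. -/
def RP2 : Type := Quotient antipodalSetoid

noncomputable instance : TopologicalSpace RP2 :=
  inferInstanceAs (TopologicalSpace (Quotient antipodalSetoid))

/-- `f : 𝒢_v → ℝP²` is the map taking each unordered pair `{p,q}` to the direction of the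
line through `p` and `q`: the value of `f` at `{p,q}` is the class of a unit vector `w`
parallel to `p − q`. -/
def IsDirectionMap (v : ℝ) (f : C(↥(graspSublevel v), RP2)) : Prop :=
  ∀ (p q : Sphere2) (h : Sym2.mk p q ∈ graspSublevel v),
    ∃ (w : Sphere2) (c : ℝ), (w : E3) = c • ((p : E3) - (q : E3)) ∧
      f ⟨Sym2.mk p q, h⟩ = Quotient.mk antipodalSetoid w

/-- `g : ℝP² → 𝒢_v` is the map taking each direction `w` to the unordered pair of the two
points at which the line through the origin with direction `w` meets `S²`, i.e. `{w, −w}`. -/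
def IsAntipodalPairMap (v : ℝ) (g : C(RP2, ↥(graspSublevel v))) : Prop :=
  ∀ w : Sphere2, ((g (Quotient.mk antipodalSetoid w) : GraspSpace)) = Sym2.mk w (-w)

namespace GP


open Metric

noncomputable def dir (p q : E3) : E3 := ‖p - q‖⁻¹ • (p - q)
noncomputable def avec (t : ℝ) (p q : E3) : E3 := (1 - t) • dir p q + t • p
noncomputable def pvec (t : ℝ) (p q : E3) : E3 := ‖avec t p q‖⁻¹ • avec t p q

variable {p q : E3} {t : ℝ}

local notation "⟪" x ", " y "⟫" => @inner ℝ E3 _ x y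

lemma dist_le_two (hp : ‖p‖ = 1) (hq : ‖q‖ = 1) : ‖p - q‖ ≤ 2 := by
  calc ‖p - q‖ ≤ ‖p‖ + ‖q‖ := norm_sub_le _ _
  _ = 2 := by rw [hp, hq]; norm_num

lemma inner_eq (hp : ‖p‖ = 1) (hq : ‖q‖ = 1) : ⟪p, q⟫ = 1 - ‖p - q‖ ^ 2 / 2 := by
  have h := norm_sub_sq_real p q
  rw [hp, hq] at h
  linarith

lemma norm_dir (h : p ≠ q) : ‖dir p q‖ = 1 := by
  have h0 : ‖p - q‖ ≠ 0 := norm_ne_zero_iff.2 (sub_ne_zero.2 h)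
  rw [dir, norm_smul, norm_inv, norm_norm, inv_mul_cancel₀ h0]

lemma dir_swap (h : p ≠ q) : dir q p = -dir p q := by
  rw [dir, dir, norm_sub_rev, ← smul_neg, neg_sub]

lemma inner_dir_left (hp : ‖p‖ = 1) (hq : ‖q‖ = 1) (h : p ≠ q) :
    ⟪dir p q, p⟫ = ‖p - q‖ / 2 := by
  have h0 : ‖p - q‖ ≠ 0 := norm_ne_zero_iff.2 (sub_ne_zero.2 h)
  rw [dir, real_inner_smul_left, inner_sub_left, real_inner_self_eq_norm_sq, hp,
    real_inner_comm, inner_eq hp hq]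
  field_simp
  ring

lemma norm_avec_sq (hp : ‖p‖ = 1) (hq : ‖q‖ = 1) (h : p ≠ q) :
    ‖avec t p q‖ ^ 2 = (1 - t) ^ 2 + t ^ 2 + (1 - t) * t * ‖p - q‖ := by
  have h1 := norm_add_sq_real ((1 - t) • dir p q) (t • p)
  rw [real_inner_smul_left, real_inner_smul_right, inner_dir_left hp hq h] at h1
  rw [avec, h1, norm_smul, norm_smul, norm_dir h, hp]
  rw [mul_pow, mul_pow]
  simp only [Real.norm_eq_abs, sq_abs, mul_one, one_pow]
  ring

lemma avec_ne_zero (hp : ‖p‖ = 1) (hq : ‖q‖ = 1) (h : p ≠ q) (ht0 : 0 ≤ t) (ht1 : t ≤ 1) :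
    avec t p q ≠ 0 := by
  intro hc
  have h2 : ‖avec t p q‖ ^ 2 = 0 := by rw [hc]; simp
  rw [norm_avec_sq hp hq h] at h2
  have hd : 0 ≤ ‖p - q‖ := norm_nonneg _
  nlinarith [sq_nonneg (1 - t), sq_nonneg t, sq_nonneg (1 - 2*t),
    mul_nonneg (mul_nonneg (by linarith : (0:ℝ) ≤ 1 - t) ht0) hd]

lemma norm_avec_pos (hp : ‖p‖ = 1) (hq : ‖q‖ = 1) (h : p ≠ q) (ht0 : 0 ≤ t) (ht1 : t ≤ 1) :
    0 < ‖avec t p q‖ :=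
  norm_pos_iff.2 (avec_ne_zero hp hq h ht0 ht1)

lemma norm_pvec (hp : ‖p‖ = 1) (hq : ‖q‖ = 1) (h : p ≠ q) (ht0 : 0 ≤ t) (ht1 : t ≤ 1) :
    ‖pvec t p q‖ = 1 := by
  have h0 : ‖avec t p q‖ ≠ 0 := (norm_avec_pos hp hq h ht0 ht1).ne'
  rw [pvec, norm_smul, norm_inv, norm_norm, inv_mul_cancel₀ h0]

lemma avec_sub (h : p ≠ q) :
    avec t p q - avec t q p = (2 * (1 - t) * ‖p - q‖⁻¹ + t) • (p - q) := by
  rw [avec, avec, dir_swap h, dir, smul_neg, smul_smul]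
  module

lemma norm_avec_eq (hp : ‖p‖ = 1) (hq : ‖q‖ = 1) (h : p ≠ q) :
    ‖avec t q p‖ = ‖avec t p q‖ := by
  have hqp : q ≠ p := fun hc => h hc.symm
  have h1 := norm_avec_sq (t := t) hp hq h
  have h2 := norm_avec_sq (t := t) hq hp hqp
  rw [norm_sub_rev] at h2
  have h3 : ‖avec t q p‖ ^ 2 = ‖avec t p q‖ ^ 2 := h2.trans h1.symm
  nlinarith [norm_nonneg (avec t q p), norm_nonneg (avec t p q)]

lemma pvec_sub (hp : ‖p‖ = 1) (hq : ‖q‖ = 1) (h : p ≠ q) :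
    pvec t p q - pvec t q p =
      (‖avec t p q‖⁻¹ * (2 * (1 - t) * ‖p - q‖⁻¹ + t)) • (p - q) := by
  rw [pvec, pvec, norm_avec_eq hp hq h, ← smul_sub, avec_sub h, smul_smul]

lemma norm_pvec_sub (hp : ‖p‖ = 1) (hq : ‖q‖ = 1) (h : p ≠ q) (ht0 : 0 ≤ t) (ht1 : t ≤ 1) :
    ‖pvec t p q - pvec t q p‖ =
      (2 * (1 - t) + t * ‖p - q‖) / ‖avec t p q‖ := by
  have hd : 0 < ‖p - q‖ := norm_pos_iff.2 (sub_ne_zero.2 h)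
  have ha : 0 < ‖avec t p q‖ := norm_avec_pos hp hq h ht0 ht1
  have hcoef : 0 ≤ ‖avec t p q‖⁻¹ * (2 * (1 - t) * ‖p - q‖⁻¹ + t) := by
    apply mul_nonneg (inv_nonneg.2 ha.le)
    have : (0:ℝ) ≤ 2 * (1 - t) * ‖p - q‖⁻¹ :=
      mul_nonneg (by linarith) (inv_nonneg.2 hd.le)
    linarith
  rw [pvec_sub hp hq h, norm_smul, Real.norm_eq_abs, abs_of_nonneg hcoef]
  field_simp

lemma key_ineq (hp : ‖p‖ = 1) (hq : ‖q‖ = 1) (h : p ≠ q) (ht0 : 0 ≤ t) (ht1 : t ≤ 1) :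
    ‖p - q‖ ≤ ‖pvec t p q - pvec t q p‖ := by
  have hd : 0 < ‖p - q‖ := norm_pos_iff.2 (sub_ne_zero.2 h)
  have hd2 : ‖p - q‖ ≤ 2 := dist_le_two hp hq
  have ha : 0 < ‖avec t p q‖ := norm_avec_pos hp hq h ht0 ht1
  have hN := norm_avec_sq (t := t) hp hq h
  rw [norm_pvec_sub hp hq h ht0 ht1, le_div_iff₀ ha]
  set d := ‖p - q‖
  set a := ‖avec t p q‖
  have hsq : (d * a) ^ 2 ≤ (2 * (1 - t) + t * d) ^ 2 := by
    have hkey : (0:ℝ) ≤ (1 - t) * (4 - d ^ 2) * ((1 - t) + t * d) := by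
      have h4 : (0:ℝ) ≤ 4 - d ^ 2 := by nlinarith
      have h5 : (0:ℝ) ≤ (1 - t) + t * d := by nlinarith [mul_nonneg ht0 hd.le]
      exact mul_nonneg (mul_nonneg (by linarith) h4) h5
    nlinarith [hN]
  have hrhs : (0:ℝ) ≤ 2 * (1 - t) + t * d := by nlinarith [mul_nonneg ht0 hd.le]
  exact (abs_le_of_sq_le_sq' hsq hrhs).2

lemma pvec_zero (h : p ≠ q) : pvec 0 p q = dir p q := by
  have h1 : avec 0 p q = dir p q := by rw [avec]; module
  rw [pvec, h1, norm_dir h]; norm_num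

lemma pvec_one (hp : ‖p‖ = 1) : pvec 1 p q = p := by
  have h1 : avec 1 p q = p := by rw [avec]; module
  rw [pvec, h1, hp]; norm_num

end GP

namespace GraspAux

open Metric TopologicalSpace Topology

attribute [local instance] Classical.propDecidable

def mkG (x : Sphere2 × Sphere2) : GraspSpace := Sym2.mk x.1 x.2

lemma snorm (p : Sphere2) : ‖(p : E3)‖ = 1 := mem_sphere_zero_iff_norm.1 p.2

lemma scoe_ne {p q : Sphere2} (h : p ≠ q) : (p : E3) ≠ (q : E3) :=
  fun hc => h (Subtype.coe_injective hc)

noncomputable def pairNC (x : Sphere2 × Sphere2) : NonemptyCompacts E3 :=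
  ⟨⟨{(x.1 : E3), (x.2 : E3)}, ((Set.finite_singleton _).insert _).isCompact⟩,
    Set.insert_nonempty _ _⟩

lemma toNC_mk (p q : Sphere2) : GraspSpace.toNC (Sym2.mk p q) = pairNC (p, q) := rfl

lemma graspCost_mk (p q : Sphere2) :
    graspCost (Sym2.mk p q) = -dist (p : E3) (q : E3) := rfl

lemma mem_sublevel_mk {v : ℝ} {p q : Sphere2} :
    @Membership.mem GraspSpace (Set GraspSpace) _ (graspSublevel v) (Sym2.mk p q) ↔ -dist (p : E3) (q : E3) ≤ v := Iff.rfl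

lemma pairNC_coe (x : Sphere2 × Sphere2) :
    (pairNC x : Set E3) = {(x.1 : E3), (x.2 : E3)} := rfl

lemma pair_dist_aux : ∀ (a b : Sphere2 × Sphere2), ∀ x ∈ (pairNC a : Set E3),
    ∃ y ∈ (pairNC b : Set E3), dist x y ≤ dist a b := by
  rintro ⟨p, q⟩ ⟨p', q'⟩ x hx
  rcases hx with rfl | hx
  · refine ⟨p', Set.mem_insert _ _, ?_⟩
    rw [Prod.dist_eq, ← Subtype.dist_eq p p']
    exact le_max_left _ _
  · rw [Set.mem_singleton_iff] at hx
    subst hx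
    refine ⟨q', Set.mem_insert_of_mem _ rfl, ?_⟩
    rw [Prod.dist_eq, ← Subtype.dist_eq q q']
    exact le_max_right _ _

lemma lipschitz_pairNC : LipschitzWith 1 pairNC := by
  apply LipschitzWith.of_dist_le_mul
  intro a b
  rw [NNReal.coe_one, one_mul, NonemptyCompacts.dist_eq]
  apply hausdorffDist_le_of_mem_dist dist_nonneg (pair_dist_aux a b)
  intro y hy
  obtain ⟨x, hx, hxy⟩ := pair_dist_aux b a y hy
  exact ⟨x, hx, by rwa [dist_comm b a] at hxy⟩

lemma continuous_mkG : Continuous mkG := by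
  have he : (GraspSpace.toNC ∘ mkG) = pairNC := by
    funext x
    exact toNC_mk x.1 x.2
  exact continuous_induced_rng.2 (he ▸ lipschitz_pairNC.continuous)

lemma toNC_injective : Function.Injective GraspSpace.toNC := by
  intro g h
  refine Sym2.inductionOn₂ g h (fun p q r s hpq => ?_)
  have hset : ({(p : E3), (q : E3)} : Set E3) = {(r : E3), (s : E3)} := by
    have := congrArg (fun t : NonemptyCompacts E3 => (t : Set E3)) hpq
    simpa [toNC_mk, pairNC_coe] using this
  rcases Set.pair_eq_pair_iff.1 hset with ⟨h1, h2⟩ | ⟨h1, h2⟩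
  · rw [Subtype.coe_injective h1, Subtype.coe_injective h2]
  · rw [Subtype.coe_injective h1, Subtype.coe_injective h2]
    exact Sym2.eq_swap

lemma isEmbedding_toNC : IsEmbedding GraspSpace.toNC := ⟨⟨rfl⟩, toNC_injective⟩

instance : T2Space GraspSpace := isEmbedding_toNC.t2Space

def Dset (v : ℝ) : Set (Sphere2 × Sphere2) := {x | -dist (x.1 : E3) (x.2 : E3) ≤ v}

lemma isClosed_Dset (v : ℝ) : IsClosed (Dset v) := by
  have : Dset v = (fun x : Sphere2 × Sphere2 => -dist (x.1 : E3) (x.2 : E3)) ⁻¹' Set.Iic v := rfl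
  rw [this]
  apply IsClosed.preimage _ isClosed_Iic
  exact (Continuous.dist (continuous_subtype_val.comp continuous_fst)
    (continuous_subtype_val.comp continuous_snd)).neg

instance (v : ℝ) : CompactSpace ↥(Dset v) :=
  isCompact_iff_compactSpace.mp (isClosed_Dset v).isCompact

noncomputable def qv (v : ℝ) (x : ↥(Dset v)) : ↥(graspSublevel v) :=
  ⟨mkG x.1, x.2⟩

lemma continuous_qv (v : ℝ) : Continuous (qv v) :=
  (continuous_mkG.comp continuous_subtype_val).subtype_mk _

lemma surjective_qv (v : ℝ) : Function.Surjective (qv v) := by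
  rintro ⟨g, hg⟩
  induction g using Sym2.ind with
  | _ p q => exact ⟨⟨(p, q), hg⟩, rfl⟩

lemma qv_isQuotientMap (v : ℝ) : IsQuotientMap (qv v) :=
  ((continuous_qv v).isClosedMap).isQuotientMap (continuous_qv v) (surjective_qv v)

lemma prod_qv_isQuotientMap (v : ℝ) :
    IsQuotientMap (Prod.map (id : unitInterval → unitInterval) (qv v)) := by
  have hc : Continuous (Prod.map (id : unitInterval → unitInterval) (qv v)) :=
    continuous_id.prodMap (continuous_qv v)
  exact (hc.isClosedMap).isQuotientMap hc
    (Function.Surjective.prodMap Function.surjective_id (surjective_qv v))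

/-! ### The direction map -/

noncomputable def dirS (p q : Sphere2) : Sphere2 :=
  if h : (p : E3) ≠ (q : E3) then
    ⟨GP.dir p q, by rw [mem_sphere_zero_iff_norm]; exact GP.norm_dir h⟩
  else p

lemma dirS_coe {p q : Sphere2} (h : (p : E3) ≠ (q : E3)) :
    (dirS p q : E3) = GP.dir (p : E3) (q : E3) := by
  rw [dirS, dif_pos h]

lemma dirS_swap {p q : Sphere2} (h : (p : E3) ≠ (q : E3)) :
    dirS q p = -dirS p q := by
  have h' : (q : E3) ≠ (p : E3) := fun hc => h hc.symm
  apply Subtype.ext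
  rw [coe_neg_sphere, dirS_coe h, dirS_coe h', GP.dir_swap h]

noncomputable def F0 : GraspSpace → RP2 :=
  Sym2.lift ⟨fun p q => Quotient.mk antipodalSetoid (dirS p q), by
    intro p q
    dsimp only
    by_cases h : (p : E3) = (q : E3)
    · rw [Subtype.coe_injective h]
    · apply Quot.sound
      show (dirS p q : E3) = (dirS q p : E3) ∨ (dirS p q : E3) = -(dirS q p : E3)
      right
      rw [dirS_swap h, coe_neg_sphere, neg_neg]⟩

lemma F0_mk (p q : Sphere2) : F0 (Sym2.mk p q) = Quotient.mk antipodalSetoid (dirS p q) := by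
  rfl

lemma continuous_dirS {X : Type*} [TopologicalSpace X] {fp fq : X → Sphere2}
    (hfp : Continuous fp) (hfq : Continuous fq)
    (hne : ∀ x, (fp x : E3) ≠ (fq x : E3)) :
    Continuous fun x => dirS (fp x) (fq x) := by
  rw [IsInducing.subtypeVal.continuous_iff]
  have he : (Subtype.val ∘ fun x => dirS (fp x) (fq x)) =
      fun x => GP.dir (fp x : E3) (fq x : E3) := by
    funext x
    exact dirS_coe (hne x)
  rw [he]
  unfold GP.dir
  have h1 : Continuous fun x => (fp x : E3) - (fq x : E3) :=
    (continuous_subtype_val.comp hfp).sub (continuous_subtype_val.comp hfq)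
  exact (h1.norm.inv₀ fun x => norm_ne_zero_iff.2 (sub_ne_zero.2 (hne x))).smul h1

lemma Dset_ne {v : ℝ} (hv : v < 0) {x : Sphere2 × Sphere2} (hx : x ∈ Dset v) :
    (x.1 : E3) ≠ (x.2 : E3) := by
  have : 0 < dist (x.1 : E3) (x.2 : E3) := by
    have := hx
    simp only [Dset, Set.mem_setOf_eq] at this
    linarith
  exact dist_pos.1 this

noncomputable def fMap (v : ℝ) (hv : v < 0) : C(↥(graspSublevel v), RP2) where
  toFun x := F0 x.1
  continuous_toFun := by
    rw [(qv_isQuotientMap v).continuous_iff]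
    have he : ((fun x : ↥(graspSublevel v) => F0 x.1) ∘ qv v) =
        fun y : ↥(Dset v) => Quotient.mk antipodalSetoid (dirS y.1.1 y.1.2) := by
      funext y
      exact F0_mk y.1.1 y.1.2
    rw [he]
    exact Continuous.comp continuous_quot_mk
      (continuous_dirS ((continuous_fst.comp continuous_subtype_val))
        ((continuous_snd.comp continuous_subtype_val))
        (fun y => Dset_ne hv y.2))

lemma fMap_isDirectionMap (v : ℝ) (hv : v < 0) : IsDirectionMap v (fMap v hv) := by
  intro p q h
  have hne : (p : E3) ≠ (q : E3) := by
    have h' : -dist (p : E3) (q : E3) ≤ v := h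
    exact dist_pos.1 (by linarith)
  refine ⟨dirS p q, ‖(p : E3) - (q : E3)‖⁻¹, ?_, ?_⟩
  · rw [dirS_coe hne]; rfl
  · exact F0_mk p q

/-! ### The antipodal pair map -/

lemma dist_neg (w : Sphere2) : dist (w : E3) ((-w : Sphere2) : E3) = 2 := by
  rw [coe_neg_sphere, dist_eq_norm, sub_neg_eq_add, ← two_smul ℝ, norm_smul, snorm w]
  simp

noncomputable def gPoint (v : ℝ) (hv0 : -2 < v) (w : Sphere2) : ↥(graspSublevel v) :=
  ⟨Sym2.mk w (-w), by
    rw [mem_sublevel_mk, dist_neg w]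
    linarith⟩

noncomputable def gMap (v : ℝ) (hv0 : -2 < v) : C(RP2, ↥(graspSublevel v)) where
  toFun := Quotient.lift (gPoint v hv0) (by
    intro w w' hww
    rcases hww with h | h
    · rw [Subtype.coe_injective h]
    · have hw : w = -w' := Subtype.ext (by rw [h, coe_neg_sphere])
      apply Subtype.ext
      show Sym2.mk w (-w) = Sym2.mk w' (-w')
      rw [hw, neg_neg]
      exact Sym2.eq_swap)
  continuous_toFun := by
    apply continuous_quot_lift
    apply Continuous.subtype_mk
    have : Continuous fun w : Sphere2 => (w, -w) :=
      continuous_id.prodMk continuous_neg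
    exact continuous_mkG.comp this

lemma gMap_isAntipodalPairMap (v : ℝ) (hv0 : -2 < v) :
    IsAntipodalPairMap v (gMap v hv0) := fun w => rfl

/-! ### Values of arbitrary f and g -/

/-! ### The homotopy -/

noncomputable def PtS (t : ℝ) (p q : Sphere2) : Sphere2 :=
  if h : (p : E3) ≠ (q : E3) ∧ 0 ≤ t ∧ t ≤ 1 then
    ⟨GP.pvec t (p : E3) (q : E3), by
      rw [mem_sphere_zero_iff_norm]
      exact GP.norm_pvec (snorm p) (snorm q) h.1 h.2.1 h.2.2⟩
  else p

lemma PtS_coe {t : ℝ} {p q : Sphere2} (h : (p : E3) ≠ (q : E3)) (ht0 : 0 ≤ t) (ht1 : t ≤ 1) :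
    (PtS t p q : E3) = GP.pvec t (p : E3) (q : E3) := by
  rw [PtS, dif_pos ⟨h, ht0, ht1⟩]

lemma PtS_one {p q : Sphere2} (h : (p : E3) ≠ (q : E3)) : PtS 1 p q = p :=
  Subtype.ext (by rw [PtS_coe h zero_le_one le_rfl, GP.pvec_one (snorm p)])

lemma PtS_zero {p q : Sphere2} (h : (p : E3) ≠ (q : E3)) : PtS 0 p q = dirS p q :=
  Subtype.ext (by rw [PtS_coe h le_rfl zero_le_one, GP.pvec_zero h, dirS_coe h])

noncomputable def hpair (t : ℝ) : GraspSpace → GraspSpace :=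
  Sym2.lift ⟨fun p q => Sym2.mk (PtS t p q) (PtS t q p), fun p q => Sym2.eq_swap⟩

lemma hpair_mk (t : ℝ) (p q : Sphere2) :
    hpair t (Sym2.mk p q) = Sym2.mk (PtS t p q) (PtS t q p) := by
  rfl

lemma sublevel_ne {v : ℝ} (hv : v < 0) {p q : Sphere2}
    (h : Sym2.mk p q ∈ graspSublevel v) : (p : E3) ≠ (q : E3) := by
  have h' : -dist (p : E3) (q : E3) ≤ v := h
  exact dist_pos.1 (by linarith)

lemma hpair_mem {v : ℝ} (hv : v < 0) {t : ℝ} (ht0 : 0 ≤ t) (ht1 : t ≤ 1)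
    {g : GraspSpace} (hg : g ∈ graspSublevel v) : hpair t g ∈ graspSublevel v := by
  revert hg
  refine Sym2.ind (fun p q hg => ?_) g
  have hne := sublevel_ne hv hg
  have hqp : (q : E3) ≠ (p : E3) := fun hc => hne hc.symm
  rw [hpair_mk]
  rw [mem_sublevel_mk] at hg ⊢
  rw [PtS_coe hne ht0 ht1, PtS_coe hqp ht0 ht1, dist_eq_norm]
  have hk := GP.key_ineq (t := t) (snorm p) (snorm q) hne ht0 ht1
  rw [dist_eq_norm] at hg
  linarith

lemma continuous_PtS {X : Type*} [TopologicalSpace X] {ft : X → ℝ} {fp fq : X → Sphere2}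
    (hft : Continuous ft) (hfp : Continuous fp) (hfq : Continuous fq)
    (hne : ∀ x, (fp x : E3) ≠ (fq x : E3)) (ht0 : ∀ x, 0 ≤ ft x) (ht1 : ∀ x, ft x ≤ 1) :
    Continuous fun x => PtS (ft x) (fp x) (fq x) := by
  rw [IsInducing.subtypeVal.continuous_iff]
  have he : (Subtype.val ∘ fun x => PtS (ft x) (fp x) (fq x)) =
      fun x => GP.pvec (ft x) (fp x : E3) (fq x : E3) := by
    funext x
    exact PtS_coe (hne x) (ht0 x) (ht1 x)
  rw [he]
  have h1 : Continuous fun x => (fp x : E3) - (fq x : E3) :=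
    (continuous_subtype_val.comp hfp).sub (continuous_subtype_val.comp hfq)
  have h2 : Continuous fun x => GP.dir (fp x : E3) (fq x : E3) := by
    unfold GP.dir
    exact (h1.norm.inv₀ fun x => norm_ne_zero_iff.2 (sub_ne_zero.2 (hne x))).smul h1
  have h3 : Continuous fun x => GP.avec (ft x) (fp x : E3) (fq x : E3) := by
    unfold GP.avec
    exact ((continuous_const.sub hft).smul h2).add
      (hft.smul (continuous_subtype_val.comp hfp))
  have h4 : ∀ x, GP.avec (ft x) (fp x : E3) (fq x : E3) ≠ 0 := fun x =>
    GP.avec_ne_zero (snorm (fp x)) (snorm (fq x)) (hne x) (ht0 x) (ht1 x)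
  unfold GP.pvec
  exact (h3.norm.inv₀ fun x => norm_ne_zero_iff.2 (h4 x)).smul h3

noncomputable def Hfun (v : ℝ) (hv : v < 0) :
    unitInterval × ↥(graspSublevel v) → ↥(graspSublevel v) :=
  fun z => ⟨hpair z.1 z.2.1, hpair_mem hv z.1.2.1 z.1.2.2 z.2.2⟩

lemma continuous_Hfun (v : ℝ) (hv : v < 0) : Continuous (Hfun v hv) := by
  rw [(prod_qv_isQuotientMap v).continuous_iff]
  show Continuous fun z : unitInterval × ↥(Dset v) =>
    (⟨hpair z.1 (mkG z.2.1), _⟩ : ↥(graspSublevel v))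
  apply Continuous.subtype_mk
  have he : (fun z : unitInterval × ↥(Dset v) => hpair (z.1 : ℝ) (mkG z.2.1)) =
      fun z : unitInterval × ↥(Dset v) =>
        mkG (PtS z.1 z.2.1.1 z.2.1.2, PtS z.1 z.2.1.2 z.2.1.1) := by
    funext z
    exact hpair_mk _ _ _
  rw [he]
  have hft : Continuous fun z : unitInterval × ↥(Dset v) => (z.1 : ℝ) :=
    continuous_subtype_val.comp continuous_fst
  have hfp : Continuous fun z : unitInterval × ↥(Dset v) => z.2.1.1 :=
    continuous_fst.comp (continuous_subtype_val.comp continuous_snd)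
  have hfq : Continuous fun z : unitInterval × ↥(Dset v) => z.2.1.2 :=
    continuous_snd.comp (continuous_subtype_val.comp continuous_snd)
  have hne : ∀ z : unitInterval × ↥(Dset v), ((z.2.1.1 : Sphere2) : E3) ≠ (z.2.1.2 : E3) :=
    fun z => Dset_ne hv z.2.2
  have hne' : ∀ z : unitInterval × ↥(Dset v), ((z.2.1.2 : Sphere2) : E3) ≠ (z.2.1.1 : E3) :=
    fun z => fun hc => hne z hc.symm
  exact continuous_mkG.comp
    ((continuous_PtS hft hfp hfq hne (fun z => z.1.2.1) (fun z => z.1.2.2)).prodMk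
      (continuous_PtS hft hfq hfp hne' (fun z => z.1.2.1) (fun z => z.1.2.2)))

end GraspAux


/-- There exists `v₀ < 0` such that for every `v` with `v₀ < v < 0` the map
`f : 𝒢_v → ℝP²` taking each unordered pair `{p,q}` to the direction of the line through `p`
and `q` is a homotopy equivalence, with homotopy inverse the map `g : ℝP² → 𝒢_v` taking each
direction `w` to the unordered pair of the two points at which the line through the origin
with direction `w` meets `S²`. -/
theorem direction_map_homotopyEquiv :
    ∃ v₀ : ℝ, v₀ < 0 ∧ ∀ v : ℝ, v₀ < v → v < 0 →
      (∃ f : C(↥(graspSublevel v), RP2), IsDirectionMap v f) ∧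
      (∃ g : C(RP2, ↥(graspSublevel v)), IsAntipodalPairMap v g) ∧
      ∀ (f : C(↥(graspSublevel v), RP2)) (g : C(RP2, ↥(graspSublevel v))),
        IsDirectionMap v f → IsAntipodalPairMap v g →
          (f.comp g).Homotopic (ContinuousMap.id RP2) ∧
          (g.comp f).Homotopic (ContinuousMap.id ↥(graspSublevel v)) := by
  classical
  refine ⟨-1, by norm_num, fun v hv0 hv => ?_⟩
  have hv2 : -2 < v := by linarith
  refine ⟨⟨GraspAux.fMap v hv, GraspAux.fMap_isDirectionMap v hv⟩,
    ⟨GraspAux.gMap v hv2, GraspAux.gMap_isAntipodalPairMap v hv2⟩, ?_⟩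
  intro f g hf hg
  constructor
  · -- f ∘ g homotopic to id
    have hfg : f.comp g = ContinuousMap.id RP2 := by
      ext x
      obtain ⟨w⟩ := x
      show f (g (Quotient.mk antipodalSetoid w)) = Quotient.mk antipodalSetoid w
      have hmem : Sym2.mk w (-w) ∈ graspSublevel v := by
        refine GraspAux.mem_sublevel_mk.2 ?_
        rw [GraspAux.dist_neg w]
        linarith
      have hgw' : g (Quotient.mk antipodalSetoid w) = ⟨Sym2.mk w (-w), hmem⟩ :=
        Subtype.ext (hg w)
      rw [hgw']
      obtain ⟨w', c, hw', hfval⟩ := hf w (-w) hmem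
      rw [hfval]
      have hcoe : (w' : E3) = (2 * c) • (w : E3) := by
        rw [hw', coe_neg_sphere, sub_neg_eq_add, ← two_smul ℝ, smul_smul, mul_comm]
      have habs : |2 * c| = 1 := by
        have h1 : ‖(w' : E3)‖ = 1 := GraspAux.snorm w'
        rw [hcoe, norm_smul, GraspAux.snorm w, mul_one, Real.norm_eq_abs] at h1
        exact h1
      apply Quot.sound
      show (w' : E3) = (w : E3) ∨ (w' : E3) = -(w : E3)
      rcases (abs_eq (by norm_num : (0:ℝ) ≤ 1)).1 habs with h2 | h2
      · left; rw [hcoe, h2, one_smul]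
      · right; rw [hcoe, h2, neg_one_smul]
    rw [hfg]
  · -- g ∘ f homotopic to id
    refine ⟨⟨⟨GraspAux.Hfun v hv, GraspAux.continuous_Hfun v hv⟩, ?_, ?_⟩⟩
    · -- map_zero_left
      rintro ⟨gx, hgx⟩
      revert hgx
      refine Sym2.ind (fun p q hgx => ?_) gx
      have hne := GraspAux.sublevel_ne hv hgx
      have hqp : (q : E3) ≠ (p : E3) := fun hc => hne hc.symm
      apply Subtype.ext
      show GraspAux.hpair ((0 : unitInterval) : ℝ) (Sym2.mk p q) =
        ((g.comp f) ⟨Sym2.mk p q, hgx⟩ : GraspSpace)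
      obtain ⟨w, c, hw, hfval⟩ := hf p q hgx
      show _ = ((g (f ⟨Sym2.mk p q, hgx⟩)) : GraspSpace)
      rw [hfval, hg w]
      rw [Set.Icc.coe_zero, GraspAux.hpair_mk, GraspAux.PtS_zero hne, GraspAux.PtS_zero hqp,
        GraspAux.dirS_swap hne]
      -- now : Sym2.mk (dirS p q) (-dirS p q) = Sym2.mk w (-w)
      have hd : (0:ℝ) < ‖(p : E3) - (q : E3)‖ := norm_pos_iff.2 (sub_ne_zero.2 hne)
      have habs : |c| * ‖(p : E3) - (q : E3)‖ = 1 := by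
        have h1 : ‖(w : E3)‖ = 1 := GraspAux.snorm w
        rw [hw, norm_smul, Real.norm_eq_abs] at h1
        exact h1
      have hdir : (GraspAux.dirS p q : E3) = ‖(p : E3) - (q : E3)‖⁻¹ • ((p : E3) - (q : E3)) :=
        GraspAux.dirS_coe hne
      rcases abs_cases c with ⟨hc1, _⟩ | ⟨hc1, _⟩
      · have hcval : c = ‖(p : E3) - (q : E3)‖⁻¹ := by
          rw [hc1] at habs
          field_simp at habs ⊢
          linarith [habs]
        have hw2 : w = GraspAux.dirS p q := by
          apply Subtype.ext
          rw [hw, hdir, hcval]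
        rw [hw2]
      · have hcval : c = -‖(p : E3) - (q : E3)‖⁻¹ := by
          rw [hc1] at habs
          field_simp at habs ⊢
          linarith [habs]
        have hw2 : w = -GraspAux.dirS p q := by
          apply Subtype.ext
          rw [hw, hcval, coe_neg_sphere, hdir, neg_smul]
        rw [hw2, neg_neg]
        exact Sym2.eq_swap
    · -- map_one_left
      rintro ⟨gx, hgx⟩
      revert hgx
      refine Sym2.ind (fun p q hgx => ?_) gx
      have hne := GraspAux.sublevel_ne hv hgx
      have hqp : (q : E3) ≠ (p : E3) := fun hc => hne hc.symm
      apply Subtype.ext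
      show GraspAux.hpair ((1 : unitInterval) : ℝ) (Sym2.mk p q) = Sym2.mk p q
      rw [Set.Icc.coe_one, GraspAux.hpair_mk, GraspAux.PtS_one hne, GraspAux.PtS_one hqp]
end
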